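/- arXiv:1410.3451 — 2 statements merged into one kernel-verified Lean document; each statement's English description precedes it below -/
import Mathlib

section
/- Let R be a Noetherian ring. Then every ideal I ⊆ R is weakly proregular: for any finite generating set (f₀,…,f_n) of I and every integer k < 0, the inverse system of Koszul cohomology groups (H^k(K(R,(f₀^i,…,f_n^i))))_{i≥1}, with transition maps induced by multiplication, is pro-zero. -/
open Classical

section Koszul

variable {R : Type*} [CommRing R] {m : ℕ}

/-- The degree `−p` term of the Koszul complex `K(R, f)` of an `m`-tuple `f`:
the free module on `p`-element subsets of `{0,…,m−1}` (i.e. `Λ^p R^m`). -/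
def KoszulTerm (R : Type*) [CommRing R] (m p : ℕ) : Type _ :=
  {S : Finset (Fin m) // S.card = p} → R

instance (R : Type*) [CommRing R] (m p : ℕ) : AddCommGroup (KoszulTerm R m p) := by
  unfold KoszulTerm; infer_instance

/-- The sign `(−1)^{#{j ∈ S | j < i}}` appearing in the Koszul differential. -/
def koszulSign (i : Fin m) (S : Finset (Fin m)) : ℤ :=
  (-1) ^ (S.filter (fun j => j < i)).card

/-- The Koszul differential `K(R,f)^{−(p+1)} → K(R,f)^{−p}`,
`e_{i₀…i_p} ↦ Σ_j (−1)^j f_{i_j} e_{i₀…î_j…i_p}`. -/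
def koszulDiff (f : Fin m → R) (p : ℕ) (x : KoszulTerm R m (p + 1)) :
    KoszulTerm R m p :=
  fun S => ∑ i ∈ (S.1ᶜ).attach,
    (koszulSign i.1 S.1 : R) * f i.1 *
      x ⟨insert i.1 S.1, by
        rw [Finset.card_insert_of_notMem (Finset.mem_compl.mp i.2), S.2]⟩

/-- The transition map of Koszul complexes `K(R, f^j) → K(R, f^i)` for `i ≤ j`:
multiplication by `∏_{s ∈ S} f_s^{j−i}` on the basis vector `e_S`. -/
def koszulTransition (f : Fin m → R) (i j : ℕ) (p : ℕ)
    (x : KoszulTerm R m p) : KoszulTerm R m p :=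
  fun S => (∏ s ∈ S.1, f s ^ (j - i)) * x S

end Koszul


section Aux

variable {R : Type*} [CommRing R] {m : ℕ}

/-- Total-function (padded) version of a Koszul term. -/
def kpad {q : ℕ} (x : KoszulTerm R m q) (T : Finset (Fin m)) : R :=
  if h : T.card = q then x ⟨T, h⟩ else 0

lemma kpad_of_card {q : ℕ} (x : KoszulTerm R m q) {T : Finset (Fin m)} (h : T.card = q) :
    kpad x T = x ⟨T, h⟩ := dif_pos h

lemma koszulDiff_apply (F : Fin m → R) (p : ℕ) (x : KoszulTerm R m (p + 1))
    (S : Finset (Fin m)) (hS : S.card = p) :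
    koszulDiff F p x ⟨S, hS⟩ =
      ∑ i ∈ Sᶜ, (koszulSign i S : R) * F i * kpad x (insert i S) := by
  have h1 : koszulDiff F p x ⟨S, hS⟩ =
      ∑ i ∈ Sᶜ.attach, (koszulSign i.1 S : R) * F i.1 * kpad x (insert i.1 S) := by
    unfold koszulDiff
    refine Finset.sum_congr rfl fun i _ => ?_
    rw [kpad_of_card x (by
      rw [Finset.card_insert_of_notMem (Finset.mem_compl.mp i.2), hS])]
  rw [h1]
  exact Finset.sum_attach Sᶜ (fun i => (koszulSign i S : R) * F i * kpad x (insert i S))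

lemma kpad_smul {q : ℕ} (c : R) (x : KoszulTerm R m q) (T : Finset (Fin m)) :
    kpad (fun S => c * x S : KoszulTerm R m q) T = c * kpad x T := by
  unfold kpad; split_ifs <;> simp

lemma kpad_sub {q : ℕ} (x y : KoszulTerm R m q) (T : Finset (Fin m)) :
    kpad (fun S => x S - y S : KoszulTerm R m q) T = kpad x T - kpad y T := by
  unfold kpad; split_ifs <;> simp

lemma kpad_transition {q : ℕ} (F : Fin m → R) (i j : ℕ) (x : KoszulTerm R m q)
    (T : Finset (Fin m)) :
    kpad (koszulTransition F i j q x) T = (∏ s ∈ T, F s ^ (j - i)) * kpad x T := by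
  unfold kpad; split_ifs with h
  · rfl
  · simp

lemma koszulDiff_smul (F : Fin m → R) (p : ℕ) (c : R) (x : KoszulTerm R m (p + 1)) :
    koszulDiff F p (fun S => c * x S) = fun S => c * koszulDiff F p x S := by
  funext S
  obtain ⟨S, hS⟩ := S
  erw [koszulDiff_apply _ _ _ _ hS, koszulDiff_apply _ _ _ _ hS, Finset.mul_sum]
  refine Finset.sum_congr rfl fun i _ => ?_
  rw [kpad_smul]; ring

lemma koszulDiff_sub (F : Fin m → R) (p : ℕ) (x y : KoszulTerm R m (p + 1)) :
    koszulDiff F p (fun S => x S - y S) =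
      fun S => koszulDiff F p x S - koszulDiff F p y S := by
  funext S
  obtain ⟨S, hS⟩ := S
  erw [koszulDiff_apply _ _ _ _ hS, koszulDiff_apply _ _ _ _ hS, koszulDiff_apply _ _ _ _ hS,
    ← Finset.sum_sub_distrib]
  refine Finset.sum_congr rfl fun i _ => ?_
  rw [kpad_sub]; ring

lemma koszulTransition_smul {q : ℕ} (F : Fin m → R) (i j : ℕ) (c : R)
    (x : KoszulTerm R m q) :
    koszulTransition F i j q (fun S => c * x S) =
      fun S => c * koszulTransition F i j q x S := by
  funext S; unfold koszulTransition; ring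

lemma koszulTransition_sub {q : ℕ} (F : Fin m → R) (i j : ℕ) (x y : KoszulTerm R m q) :
    koszulTransition F i j q (fun S => x S - y S) =
      fun S => koszulTransition F i j q x S - koszulTransition F i j q y S := by
  funext S; unfold koszulTransition; ring

lemma koszulTransition_trans {q : ℕ} (F : Fin m → R) {i i1 j : ℕ} (h1 : i ≤ i1) (h2 : i1 ≤ j)
    (x : KoszulTerm R m q) :
    koszulTransition F i i1 q (koszulTransition F i1 j q x) =
      koszulTransition F i j q x := by
  funext S; unfold koszulTransition
  rw [← mul_assoc, ← Finset.prod_mul_distrib]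
  congr 1
  refine Finset.prod_congr rfl fun s _ => ?_
  rw [← pow_add]
  congr 1
  omega

lemma koszulTransition_comm (F : Fin m → R) {i j : ℕ} (h : i ≤ j) (p : ℕ)
    (x : KoszulTerm R m (p + 1)) :
    koszulDiff (fun a => F a ^ i) p (koszulTransition F i j (p + 1) x) =
      koszulTransition F i j p (koszulDiff (fun a => F a ^ j) p x) := by
  funext S
  obtain ⟨S, hS⟩ := S
  have : koszulTransition F i j p (koszulDiff (fun a => F a ^ j) p x) ⟨S, hS⟩ =
      (∏ s ∈ S, F s ^ (j - i)) * koszulDiff (fun a => F a ^ j) p x ⟨S, hS⟩ := rfl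
  rw [this, koszulDiff_apply _ _ _ _ hS, koszulDiff_apply _ _ _ _ hS, Finset.mul_sum]
  refine Finset.sum_congr rfl fun s hs => ?_
  rw [kpad_transition, Finset.prod_insert (Finset.mem_compl.mp hs)]
  have hp : F s ^ i * F s ^ (j - i) = F s ^ j := by
    rw [← pow_add]; congr 1; omega
  calc (koszulSign s S : R) * F s ^ i * ((F s ^ (j - i) * ∏ t ∈ S, F t ^ (j - i)) * kpad x (insert s S))
      = (F s ^ i * F s ^ (j-i)) * ((koszulSign s S : R) * (∏ t ∈ S, F t ^ (j - i)) * kpad x (insert s S)) := by ring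
    _ = (∏ t ∈ S, F t ^ (j - i)) * ((koszulSign s S : R) * F s ^ j * kpad x (insert s S)) := by rw [hp]; ring

end Aux


section Emb
variable {R : Type*} [CommRing R] {m : ℕ}

/-- Embed a finset of `Fin m` into `Fin (m+1)` via `castSucc`. -/
def femb (S : Finset (Fin m)) : Finset (Fin (m + 1)) := S.map Fin.castSuccEmb

lemma femb_eq_map (S : Finset (Fin m)) : femb S = S.map Fin.castSuccEmb := rfl

lemma card_femb (S : Finset (Fin m)) : (femb S).card = S.card := Finset.card_map _

lemma last_not_mem_femb (S : Finset (Fin m)) : Fin.last m ∉ femb S := by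
  simp only [femb, Finset.mem_map, Fin.coe_castSuccEmb]
  rintro ⟨b, -, hb⟩
  exact absurd hb (Fin.ne_of_lt (Fin.castSucc_lt_last b))

lemma femb_insert (i : Fin m) (S : Finset (Fin m)) :
    femb (insert i S) = insert i.castSucc (femb S) := by
  simp only [femb, Finset.map_insert]
  rfl

lemma mem_femb {a : Fin m} {S : Finset (Fin m)} : a.castSucc ∈ femb S ↔ a ∈ S := by
  simp only [femb, Finset.mem_map, Fin.coe_castSuccEmb]
  constructor
  · rintro ⟨b, hb, h⟩; rwa [← Fin.castSucc_injective m h]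
  · exact fun h => ⟨a, h, rfl⟩

lemma compl_femb (S : Finset (Fin m)) : (femb S)ᶜ = insert (Fin.last m) (femb Sᶜ) := by
  ext a
  rcases Fin.eq_castSucc_or_eq_last a with ⟨b, rfl⟩ | rfl
  · simp only [Finset.mem_compl, Finset.mem_insert, mem_femb]
    have : b.castSucc ≠ Fin.last m := Fin.ne_of_lt (Fin.castSucc_lt_last b)
    simp [this]
  · simp [last_not_mem_femb S]

lemma compl_insert_last (S : Finset (Fin m)) :
    (insert (Fin.last m) (femb S))ᶜ = femb Sᶜ := by
  ext a
  rcases Fin.eq_castSucc_or_eq_last a with ⟨b, rfl⟩ | rfl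
  · have : b.castSucc ≠ Fin.last m := Fin.ne_of_lt (Fin.castSucc_lt_last b)
    simp [this, mem_femb]
  · simp [last_not_mem_femb Sᶜ]

lemma koszulSign_castSucc (i : Fin m) (S : Finset (Fin m)) :
    koszulSign i.castSucc (femb S) = koszulSign i S := by
  unfold koszulSign
  congr 1
  rw [femb, Finset.filter_map, Finset.card_map]
  congr 1

lemma koszulSign_last (S : Finset (Fin m)) :
    koszulSign (Fin.last m) (femb S) = (-1) ^ S.card := by
  unfold koszulSign
  rw [Finset.filter_true_of_mem, card_femb]
  intro a ha
  rcases Fin.eq_castSucc_or_eq_last a with ⟨b, rfl⟩ | rfl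
  · exact Fin.castSucc_lt_last b
  · exact absurd ha (last_not_mem_femb S)

lemma koszulSign_castSucc_insert_last (i : Fin m) (S : Finset (Fin m)) :
    koszulSign i.castSucc (insert (Fin.last m) (femb S)) = koszulSign i S := by
  rw [← koszulSign_castSucc i S]
  unfold koszulSign
  congr 2
  rw [Finset.filter_insert, if_neg]
  exact fun h => absurd h (Fin.not_lt.mpr (le_of_lt (Fin.castSucc_lt_last i)))

/-- The preimage of a finset of `Fin (m+1)` under `castSucc`. -/
noncomputable def fdown (T : Finset (Fin (m + 1))) : Finset (Fin m) :=
  T.preimage Fin.castSucc ((Fin.castSucc_injective m).injOn)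

lemma fdown_femb (S : Finset (Fin m)) : fdown (femb S) = S :=
  Finset.preimage_map Fin.castSuccEmb S

lemma fdown_insert_last (T : Finset (Fin (m + 1))) :
    fdown (insert (Fin.last m) T) = fdown T := by
  ext b
  unfold fdown
  rw [Finset.mem_preimage, Finset.mem_preimage, Finset.mem_insert]
  have : b.castSucc ≠ Fin.last m := Fin.ne_of_lt (Fin.castSucc_lt_last b)
  simp [this]

lemma femb_fdown {T : Finset (Fin (m + 1))} (h : Fin.last m ∉ T) :
    femb (fdown T) = T := by
  ext a
  rcases Fin.eq_castSucc_or_eq_last a with ⟨b, rfl⟩ | rfl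
  · rw [mem_femb, fdown, Finset.mem_preimage]
  · simp [last_not_mem_femb, h]

lemma insert_last_femb_fdown {T : Finset (Fin (m + 1))} (h : Fin.last m ∈ T) :
    insert (Fin.last m) (femb (fdown T)) = T := by
  ext a
  rcases Fin.eq_castSucc_or_eq_last a with ⟨b, rfl⟩ | rfl
  · have : b.castSucc ≠ Fin.last m := Fin.ne_of_lt (Fin.castSucc_lt_last b)
    simp only [Finset.mem_insert, this, false_or, mem_femb, fdown, Finset.mem_preimage]
  · simp [h]

end Emb

section Split
variable {R : Type*} [CommRing R] {m : ℕ}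

/-- Component of a Koszul term on subsets avoiding the last index. -/
def splitA {p : ℕ} (x : KoszulTerm R (m + 1) p) : KoszulTerm R m p :=
  fun S => x ⟨femb S.1, by rw [card_femb, S.2]⟩

/-- Component of a Koszul term on subsets containing the last index. -/
def splitB {p : ℕ} (x : KoszulTerm R (m + 1) (p + 1)) : KoszulTerm R m p :=
  fun S => x ⟨insert (Fin.last m) (femb S.1), by
    rw [Finset.card_insert_of_notMem (last_not_mem_femb _), card_femb, S.2]⟩

lemma prod_femb (g : Fin (m + 1) → R) (S : Finset (Fin m)) :
    ∏ s ∈ femb S, g s = ∏ s ∈ S, g s.castSucc := by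
  rw [femb_eq_map, Finset.prod_map]
  rfl

lemma kpad_splitA {p : ℕ} (x : KoszulTerm R (m + 1) p) (T : Finset (Fin m)) :
    kpad (splitA x) T = kpad x (femb T) := by
  unfold kpad
  by_cases h : T.card = p
  · rw [dif_pos h, dif_pos (by rw [card_femb]; exact h)]
    rfl
  · rw [dif_neg h, dif_neg (by rw [card_femb]; exact h)]

lemma kpad_splitB {p : ℕ} (x : KoszulTerm R (m + 1) (p + 1)) (T : Finset (Fin m)) :
    kpad (splitB x) T = kpad x (insert (Fin.last m) (femb T)) := by
  unfold kpad
  by_cases h : T.card = p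
  · rw [dif_pos h, dif_pos (by
      rw [Finset.card_insert_of_notMem (last_not_mem_femb _), card_femb, h])]
    rfl
  · rw [dif_neg h, dif_neg (by
      rw [Finset.card_insert_of_notMem (last_not_mem_femb _), card_femb]
      omega)]

/-- L1: the differential evaluated on a subset avoiding the last index. -/
lemma koszulDiff_femb (F : Fin (m + 1) → R) (p : ℕ) (x : KoszulTerm R (m + 1) (p + 1))
    (S : Finset (Fin m)) (hS : S.card = p) :
    koszulDiff F p x ⟨femb S, by rw [card_femb]; exact hS⟩ =
      koszulDiff (fun a => F a.castSucc) p (splitA x) ⟨S, hS⟩ +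
        (-1 : R) ^ p * F (Fin.last m) * splitB x ⟨S, hS⟩ := by
  subst hS
  rw [koszulDiff_apply _ _ _ _ (card_femb S),
    koszulDiff_apply _ _ _ _ rfl, compl_femb,
    Finset.sum_insert (last_not_mem_femb _), femb_eq_map Sᶜ, Finset.sum_map]
  rw [add_comm]
  congr 1
  · refine Finset.sum_congr rfl fun i _ => ?_
    have h1 : (Fin.castSuccEmb : Fin m ↪ Fin (m+1)) i = i.castSucc := rfl
    rw [h1, koszulSign_castSucc]
    have h2 : insert i.castSucc (femb S) = femb (insert i S) := (femb_insert i S).symm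
    rw [h2, ← kpad_splitA]
  · rw [koszulSign_last, kpad_of_card x (by
      rw [Finset.card_insert_of_notMem (last_not_mem_femb _), card_femb])]
    push_cast
    rfl

/-- L2: the differential evaluated on a subset containing the last index. -/
lemma koszulDiff_insert_last (F : Fin (m + 1) → R) (p : ℕ)
    (x : KoszulTerm R (m + 1) (p + 2)) (S : Finset (Fin m)) (hS : S.card = p) :
    koszulDiff F (p + 1) x ⟨insert (Fin.last m) (femb S), by
        rw [Finset.card_insert_of_notMem (last_not_mem_femb _), card_femb, hS]⟩ =
      koszulDiff (fun a => F a.castSucc) p (splitB x) ⟨S, hS⟩ := by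
  rw [koszulDiff_apply _ _ _ _ (by
      rw [Finset.card_insert_of_notMem (last_not_mem_femb _), card_femb, hS]),
    koszulDiff_apply _ _ _ _ hS, compl_insert_last, femb_eq_map Sᶜ, Finset.sum_map]
  refine Finset.sum_congr rfl fun i _ => ?_
  have h1 : (Fin.castSuccEmb : Fin m ↪ Fin (m+1)) i = i.castSucc := rfl
  rw [h1, koszulSign_castSucc_insert_last]
  have h2 : insert i.castSucc (insert (Fin.last m) (femb S)) =
      insert (Fin.last m) (femb (insert i S)) := by
    rw [femb_insert, Finset.insert_comm]
  rw [h2, ← kpad_splitB]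

lemma koszulTransition_femb (f : Fin (m + 1) → R) (i j q : ℕ)
    (x : KoszulTerm R (m + 1) q) (S : Finset (Fin m)) (hS : S.card = q) :
    koszulTransition f i j q x ⟨femb S, by rw [card_femb]; exact hS⟩ =
      koszulTransition (fun a => f a.castSucc) i j q (splitA x) ⟨S, hS⟩ := by
  show (∏ s ∈ femb S, f s ^ (j - i)) * x ⟨femb S, _⟩ =
    (∏ s ∈ S, f s.castSucc ^ (j - i)) * splitA x ⟨S, hS⟩
  rw [prod_femb]
  rfl

lemma koszulTransition_insert_last (f : Fin (m + 1) → R) (i j q : ℕ)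
    (x : KoszulTerm R (m + 1) (q + 1)) (S : Finset (Fin m)) (hS : S.card = q) :
    koszulTransition f i j (q + 1) x ⟨insert (Fin.last m) (femb S), by
        rw [Finset.card_insert_of_notMem (last_not_mem_femb _), card_femb, hS]⟩ =
      f (Fin.last m) ^ (j - i) *
        koszulTransition (fun a => f a.castSucc) i j q (splitB x) ⟨S, hS⟩ := by
  show (∏ s ∈ insert (Fin.last m) (femb S), f s ^ (j - i)) * x ⟨_, _⟩ =
    f (Fin.last m) ^ (j - i) * ((∏ s ∈ S, f s.castSucc ^ (j - i)) * splitB x ⟨S, hS⟩)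
  rw [Finset.prod_insert (last_not_mem_femb _), prod_femb, mul_assoc]
  rfl

/-- Glue two components into a Koszul term for `m+1` indices. -/
noncomputable def glue {p : ℕ} (a : KoszulTerm R m (p + 1)) (b : KoszulTerm R m p) :
    KoszulTerm R (m + 1) (p + 1) :=
  fun T => if Fin.last m ∈ T.1 then kpad b (fdown T.1) else kpad a (fdown T.1)

lemma splitA_glue {p : ℕ} (a : KoszulTerm R m (p + 1)) (b : KoszulTerm R m p) :
    splitA (glue a b) = a := by
  funext S
  show (if Fin.last m ∈ femb S.1 then kpad b (fdown (femb S.1))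
    else kpad a (fdown (femb S.1))) = a S
  rw [if_neg (last_not_mem_femb _), fdown_femb, kpad_of_card a S.2]

lemma splitB_glue {p : ℕ} (a : KoszulTerm R m (p + 1)) (b : KoszulTerm R m p) :
    splitB (glue a b) = b := by
  funext S
  show (if Fin.last m ∈ insert (Fin.last m) (femb S.1) then
      kpad b (fdown (insert (Fin.last m) (femb S.1)))
    else kpad a (fdown (insert (Fin.last m) (femb S.1)))) = b S
  rw [if_pos (Finset.mem_insert_self _ _)]
  have : fdown (insert (Fin.last m) (femb S.1)) = S.1 := by
    rw [fdown_insert_last, fdown_femb]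
  rw [this, kpad_of_card b S.2]

end Split

section Key

variable {R : Type*} [CommRing R] [IsNoetherianRing R] {m : ℕ}

lemma key_lemma (f' : Fin m → R) (g : R) (c : ℕ) :
    ∃ e, c ≤ e ∧ ∀ z : R,
      g ^ e * z ∈ Ideal.span (Set.range fun s => f' s ^ e) →
      g ^ (e - c) * z ∈ Ideal.span (Set.range fun s => f' s ^ c) := by
  classical
  set J : Ideal R := Ideal.span (Set.range f') with hJ
  -- stabilization of the annihilator chain of powers of `g`
  have mono : Monotone (fun k => LinearMap.ker (LinearMap.lsmul R R (g ^ k))) := by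
    intro k l hkl x hx
    simp only [LinearMap.mem_ker, LinearMap.lsmul_apply, smul_eq_mul] at hx ⊢
    have hgl : g ^ l = g ^ (l - k) * g ^ k := by rw [← pow_add]; congr 1; omega
    rw [hgl, mul_assoc, hx, mul_zero]
  obtain ⟨k0, hk0⟩ := monotone_stabilizes_iff_noetherian.mpr inferInstance
    (⟨fun k => LinearMap.ker (LinearMap.lsmul R R (g ^ k)), mono⟩ : ℕ →o Submodule R R)
  set A : Ideal R := LinearMap.ker (LinearMap.lsmul R R (g ^ k0)) with hA
  have hAmem : ∀ w : R, w ∈ A ↔ g ^ k0 * w = 0 := by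
    intro w
    rw [hA, LinearMap.mem_ker, LinearMap.lsmul_apply, smul_eq_mul]
  have hstab : ∀ k, k0 ≤ k → ∀ w : R, g ^ k * w = 0 → w ∈ A := by
    intro k hk w hw
    have he := hk0 k hk
    have : w ∈ LinearMap.ker (LinearMap.lsmul R R (g ^ k)) := by
      rw [LinearMap.mem_ker, LinearMap.lsmul_apply, smul_eq_mul]; exact hw
    rw [hA]
    show w ∈ (⟨fun k => LinearMap.ker (LinearMap.lsmul R R (g ^ k)), mono⟩ :
      ℕ →o Submodule R R) k0
    rw [he]
    exact this
  -- the quotient module, on which `g` acts injectively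
  have greg : ∀ x : R ⧸ A, g • x = 0 → x = 0 := by
    intro x hx
    obtain ⟨w, rfl⟩ := A.mkQ_surjective x
    have : A.mkQ (g * w) = 0 := by rw [← hx, ← map_smul, smul_eq_mul]
    rw [Submodule.mkQ_apply, Submodule.Quotient.mk_eq_zero] at this
    rw [Submodule.mkQ_apply, Submodule.Quotient.mk_eq_zero]
    refine hstab (k0 + 1) (by omega) w ?_
    rw [hAmem] at this
    rw [pow_succ, mul_assoc]
    exact this
  -- Artin-Rees
  set N : Submodule R (R ⧸ A) := LinearMap.range (LinearMap.lsmul R (R ⧸ A) g) with hN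
  obtain ⟨c1, hc1⟩ := Ideal.exists_pow_inf_eq_pow_smul J N
  -- descent along powers of `g`
  have descent : ∀ k n (x : R ⧸ A),
      g ^ k • x ∈ J ^ (n + k * c1) • (⊤ : Submodule R (R ⧸ A)) →
        x ∈ J ^ n • (⊤ : Submodule R (R ⧸ A)) := by
    intro k
    induction k with
    | zero => intro n x hx; simpa using hx
    | succ k ih =>
      intro n x hx
      have h1 : g • (g ^ k • x) ∈ J ^ (n + k * c1 + c1) • (⊤ : Submodule R (R ⧸ A)) ⊓ N := by
        constructor
        · rw [smul_smul, ← pow_succ']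
          have : n + k * c1 + c1 = n + (k + 1) * c1 := by ring
          rw [this]
          exact hx
        · exact ⟨g ^ k • x, rfl⟩
      rw [hc1 (n + k * c1 + c1) (by omega)] at h1
      have h2 : g • (g ^ k • x) ∈ J ^ (n + k * c1) • N := by
        have : n + k * c1 + c1 - c1 = n + k * c1 := by omega
        rw [this] at h1
        exact Submodule.smul_mono le_rfl inf_le_right h1
      have h3 : J ^ (n + k * c1) • N =
          Submodule.map (LinearMap.lsmul R (R ⧸ A) g) (J ^ (n + k * c1) • ⊤) := by
        rw [Submodule.map_smul'', Submodule.map_top, hN]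
      rw [h3] at h2
      obtain ⟨y, hy, hy2⟩ := h2
      have h4 : g • (g ^ k • x - y) = 0 := by
        rw [smul_sub, sub_eq_zero]
        rw [LinearMap.lsmul_apply] at hy2
        exact hy2.symm
      have h5 : g ^ k • x = y := by
        have := greg _ h4
        rwa [sub_eq_zero] at this
      exact ih n x (h5 ▸ hy)
  -- the radical bound
  obtain ⟨NN, hNN⟩ := Ideal.exists_radical_pow_le_of_fg
    (Ideal.span (Set.range fun s => f' s ^ c)) (IsNoetherian.noetherian _)
  have hrad : J ≤ (Ideal.span (Set.range fun s => f' s ^ c)).radical := by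
    rw [hJ, Ideal.span_le]
    rintro _ ⟨s, rfl⟩
    exact Ideal.mem_radical_iff.mpr ⟨c, Ideal.subset_span ⟨s, rfl⟩⟩
  have hJNN : J ^ NN ≤ Ideal.span (Set.range fun s => f' s ^ c) :=
    le_trans (Ideal.pow_right_mono hrad NN) hNN
  -- assemble
  obtain ⟨k, hk⟩ : ∃ k, k = c + k0 := ⟨_, rfl⟩
  refine ⟨NN + k + k * c1, by omega, fun z hz => ?_⟩
  obtain ⟨e, he⟩ : ∃ e, e = NN + k + k * c1 := ⟨_, rfl⟩
  rw [← he] at hz ⊢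
  have step1 : g ^ e * z ∈ J ^ e := by
    refine Ideal.span_le.mpr ?_ hz
    rintro _ ⟨s, rfl⟩
    exact Ideal.pow_mem_pow (Ideal.subset_span (Set.mem_range_self s)) e
  have step2 : A.mkQ (g ^ e * z) ∈ J ^ e • (⊤ : Submodule R (R ⧸ A)) := by
    have := Submodule.smul_mem_smul step1 (Submodule.mem_top (x := A.mkQ 1))
    rwa [← map_smul, smul_eq_mul, mul_one] at this
  have step3 : g ^ k • A.mkQ (g ^ (e - k) * z) = A.mkQ (g ^ e * z) := by
    rw [← map_smul, smul_eq_mul, ← mul_assoc, ← pow_add]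
    have harith : k + (e - k) = e := by omega
    rw [harith]
  have step4 : A.mkQ (g ^ (e - k) * z) ∈ J ^ (NN + k) • (⊤ : Submodule R (R ⧸ A)) := by
    refine descent k (NN + k) _ ?_
    rw [step3]
    have : e = NN + k + k * c1 := he
    rwa [← this]
  have step5 : A.mkQ (g ^ (e - k) * z) ∈ Submodule.map A.mkQ (J ^ NN) := by
    have hle : J ^ (NN + k) • (⊤ : Submodule R (R ⧸ A)) ≤ Submodule.map A.mkQ (J ^ NN) := by
      refine Submodule.smul_le.mpr fun r hr x _ => ?_
      obtain ⟨w, rfl⟩ := A.mkQ_surjective x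
      have hrNN : r ∈ J ^ NN := Ideal.pow_le_pow_right (by omega) hr
      refine ⟨r * w, Ideal.mul_mem_right w _ hrNN, ?_⟩
      rw [← map_smul, smul_eq_mul]
    exact hle step4
  obtain ⟨w, hw, hw2⟩ := step5
  have step6 : g ^ (e - k) * z - w ∈ A := by
    have : A.mkQ (g ^ (e - k) * z - w) = 0 := by
      rw [map_sub, hw2, sub_self]
    rwa [Submodule.mkQ_apply, Submodule.Quotient.mk_eq_zero] at this
  rw [hAmem] at step6
  have step7 : g ^ (e - c) * z = g ^ k0 * w := by
    have h := step6
    rw [mul_sub, sub_eq_zero] at h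
    calc g ^ (e - c) * z = g ^ k0 * (g ^ (e - k) * z) := by
          rw [← mul_assoc, ← pow_add]
          congr 2
          omega
      _ = g ^ k0 * w := h
  rw [step7]
  exact hJNN (Ideal.mul_mem_left _ _ hw)

end Key

section Main

variable {R : Type*} [CommRing R] [IsNoetherianRing R]

lemma koszulSign_empty {m : ℕ} (s : Fin m) : koszulSign s (∅ : Finset (Fin m)) = 1 := by
  unfold koszulSign
  rw [Finset.filter_empty, Finset.card_empty, pow_zero]

lemma prore : ∀ (m : ℕ) (f : Fin m → R) (p i : ℕ), ∃ j, i ≤ j ∧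
    ∀ x : KoszulTerm R m (p + 1),
      koszulDiff (fun a => f a ^ j) p x = 0 →
      ∃ y : KoszulTerm R m (p + 1 + 1),
        koszulDiff (fun a => f a ^ i) (p + 1) y = koszulTransition f i j (p + 1) x := by
  intro m
  induction m with
  | zero =>
    intro f p i
    refine ⟨i, le_rfl, fun x _ => ⟨0, ?_⟩⟩
    funext S
    exfalso
    have h0 : S.1.card = 0 :=
      Finset.card_eq_zero.mpr (Finset.eq_empty_of_forall_notMem fun a => a.elim0)
    have := S.2
    omega
  | succ m ih =>
    intro f p i
    obtain ⟨i1, hii1, H1⟩ := ih (fun a => f a.castSucc) p i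
    -- Step 1 provider: handle the `splitB` part
    have H2 : ∃ j, i1 ≤ j ∧ ∀ x : KoszulTerm R (m + 1) (p + 1),
        koszulDiff (fun a => f a ^ j) p x = 0 →
        ∃ W : KoszulTerm R m (p + 1),
          koszulDiff (fun a => f a.castSucc ^ i1) p W =
            fun S => f (Fin.last m) ^ (j - i1) *
              koszulTransition (fun a => f a.castSucc) i1 j p (splitB x) S := by
      cases p with
      | zero =>
        obtain ⟨e, hce, he⟩ := key_lemma (fun a => f a.castSucc) (f (Fin.last m)) i1
        refine ⟨e, hce, fun x hx => ?_⟩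
        set z : R := splitB x ⟨∅, Finset.card_empty⟩ with hz
        have h0 : koszulDiff (fun a => f a ^ e) 0 x
            ⟨femb ∅, by simp [card_femb]⟩ = 0 := by rw [hx]; rfl
        rw [koszulDiff_femb (fun a => f a ^ e) 0 x ∅ rfl] at h0
        simp only [pow_zero, one_mul] at h0
        have hmem : f (Fin.last m) ^ e * z ∈
            Ideal.span (Set.range fun s : Fin m => f s.castSucc ^ e) := by
          have heq : f (Fin.last m) ^ e * z =
              -(koszulDiff (fun a => f a.castSucc ^ e) 0 (splitA x) ⟨∅, rfl⟩) := by
            exact eq_neg_of_add_eq_zero_left (by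
              rw [add_comm]; exact h0)
          rw [heq]
          refine neg_mem ?_
          rw [koszulDiff_apply (fun a => f a.castSucc ^ e) 0 (splitA x) ∅ rfl]
          refine Ideal.sum_mem _ fun s _ => ?_
          have : (koszulSign s (∅ : Finset (Fin m)) : R) * (f s.castSucc ^ e) *
              kpad (splitA x) (insert s ∅) =
              ((koszulSign s (∅ : Finset (Fin m)) : R) * kpad (splitA x) (insert s ∅)) *
                f s.castSucc ^ e := by ring
          rw [this]
          exact Ideal.mul_mem_left _ _ (Ideal.subset_span (Set.mem_range_self s))
        obtain ⟨c, hc⟩ := (Submodule.mem_span_range_iff_exists_fun R).mp (he z hmem)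
        refine ⟨fun S => c (Finset.card_eq_one.mp S.2).choose, ?_⟩
        funext S
        obtain ⟨S, hS⟩ := S
        have hSe : S = ∅ := Finset.card_eq_zero.mp hS
        subst hSe
        show koszulDiff (fun a => f a.castSucc ^ i1) 0 _ ⟨∅, hS⟩ =
          f (Fin.last m) ^ (e - i1) *
            koszulTransition (fun a => f a.castSucc) i1 e 0 (splitB x) ⟨∅, hS⟩
        rw [koszulDiff_apply (fun a => f a.castSucc ^ i1) 0
          (fun S => c (Finset.card_eq_one.mp S.2).choose) ∅ hS]
        have hterm : ∀ s : Fin m,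
            (koszulSign s (∅ : Finset (Fin m)) : R) * (f s.castSucc ^ i1) *
              kpad (fun S => c (Finset.card_eq_one.mp S.2).choose : KoszulTerm R m 1)
                (insert s ∅) = c s • f s.castSucc ^ i1 := by
          intro s
          rw [koszulSign_empty]
          have h1 : (insert s (∅ : Finset (Fin m))) = {s} := rfl
          erw [h1, kpad_of_card _ (Finset.card_singleton s)]
          have h2 : (Finset.card_eq_one.mp (Finset.card_singleton s)).choose = s := by
            have := (Finset.card_eq_one.mp (Finset.card_singleton s)).choose_spec
            exact Finset.singleton_injective this.symm
          show (1 : ℤ) * (f s.castSucc ^ i1) *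
            c (Finset.card_eq_one.mp (Finset.card_singleton s)).choose = c s • f s.castSucc ^ i1
          rw [h2, smul_eq_mul]
          push_cast
          ring
        rw [Finset.compl_empty, Finset.sum_congr rfl (fun s _ => hterm s), hc]
        show f (Fin.last m) ^ (e - i1) * z =
          f (Fin.last m) ^ (e - i1) *
            ((∏ s ∈ (∅ : Finset (Fin m)), f s.castSucc ^ (e - i1)) * splitB x ⟨∅, hS⟩)
        rw [Finset.prod_empty, one_mul]
      | succ q =>
        obtain ⟨j, hj, H⟩ := ih (fun a => f a.castSucc) q i1
        refine ⟨j, hj, fun x hx => ?_⟩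
        have hA : koszulDiff (fun a => f a.castSucc ^ j) q (splitB x) = 0 := by
          funext S
          obtain ⟨S, hS⟩ := S
          have h0 : koszulDiff (fun a => f a ^ j) (q + 1) x
              ⟨insert (Fin.last m) (femb S), by
                rw [Finset.card_insert_of_notMem (last_not_mem_femb _), card_femb, hS]⟩ =
              0 := by rw [hx]; rfl
          rw [koszulDiff_insert_last (fun a => f a ^ j) q x S hS] at h0
          exact h0
        obtain ⟨w, hw⟩ := H (splitB x) hA
        refine ⟨fun S => f (Fin.last m) ^ (j - i1) * w S, ?_⟩
        funext S
        have h1 := congrFun (koszulDiff_smul (fun a => f a.castSucc ^ i1) (q + 1)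
          (f (Fin.last m) ^ (j - i1)) w) S
        refine h1.trans ?_
        show f (Fin.last m) ^ (j - i1) *
            koszulDiff (fun a => f a.castSucc ^ i1) (q + 1) w S =
          f (Fin.last m) ^ (j - i1) *
            koszulTransition (fun a => f a.castSucc) i1 j (q + 1) (splitB x) S
        rw [congrFun hw S]
    obtain ⟨j, hi1j, H2⟩ := H2
    refine ⟨j, le_trans hii1 hi1j, fun x hx => ?_⟩
    obtain ⟨W, hW⟩ := H2 x hx
    -- the first component of the cocycle equation
    have hB : ∀ (S : Finset (Fin m)) (hS : S.card = p),
        koszulDiff (fun a => f a.castSucc ^ j) p (splitA x) ⟨S, hS⟩ =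
          -((-1 : R) ^ p * f (Fin.last m) ^ j * splitB x ⟨S, hS⟩) := by
      intro S hS
      have h0 : koszulDiff (fun a => f a ^ j) p x
          ⟨femb S, by rw [card_femb, hS]⟩ = 0 := by rw [hx]; rfl
      rw [koszulDiff_femb (fun a => f a ^ j) p x S hS] at h0
      exact eq_neg_of_add_eq_zero_left h0
    -- the corrected cocycle at stage i1
    set v : KoszulTerm R m (p + 1) := fun S =>
      koszulTransition (fun a => f a.castSucc) i1 j (p + 1) (splitA x) S -
        (-1 : R) ^ (p + 1) * f (Fin.last m) ^ i1 * W S with hv_def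
    have hv : koszulDiff (fun a => f a.castSucc ^ i1) p v = 0 := by
      funext S
      obtain ⟨S, hS⟩ := S
      have e1 := congrFun (koszulDiff_sub (fun a => f a.castSucc ^ i1) p
        (koszulTransition (fun a => f a.castSucc) i1 j (p + 1) (splitA x))
        (fun S => (-1 : R) ^ (p + 1) * f (Fin.last m) ^ i1 * W S)) ⟨S, hS⟩
      refine e1.trans ?_
      show koszulDiff (fun a => f a.castSucc ^ i1) p
          (koszulTransition (fun a => f a.castSucc) i1 j (p + 1) (splitA x)) ⟨S, hS⟩ -
        koszulDiff (fun a => f a.castSucc ^ i1) p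
          (fun S => (-1 : R) ^ (p + 1) * f (Fin.last m) ^ i1 * W S) ⟨S, hS⟩ = 0
      have e2 := congrFun (koszulTransition_comm (fun a => f a.castSucc) hi1j p
        (splitA x)) ⟨S, hS⟩
      have e3 := congrFun (koszulDiff_smul (fun a => f a.castSucc ^ i1) p
        ((-1 : R) ^ (p + 1) * f (Fin.last m) ^ i1) W) ⟨S, hS⟩
      rw [e2, e3]
      show (∏ s ∈ S, f s.castSucc ^ (j - i1)) *
          koszulDiff (fun a => f a.castSucc ^ j) p (splitA x) ⟨S, hS⟩ -
        (-1 : R) ^ (p + 1) * f (Fin.last m) ^ i1 *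
          koszulDiff (fun a => f a.castSucc ^ i1) p W ⟨S, hS⟩ = 0
      rw [hB S hS, congrFun hW ⟨S, hS⟩]
      show (∏ s ∈ S, f s.castSucc ^ (j - i1)) *
          -((-1 : R) ^ p * f (Fin.last m) ^ j * splitB x ⟨S, hS⟩) -
        (-1 : R) ^ (p + 1) * f (Fin.last m) ^ i1 *
          (f (Fin.last m) ^ (j - i1) *
            ((∏ s ∈ S, f s.castSucc ^ (j - i1)) * splitB x ⟨S, hS⟩)) = 0
      have hgg : f (Fin.last m) ^ i1 * f (Fin.last m) ^ (j - i1) = f (Fin.last m) ^ j := by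
        rw [← pow_add]; congr 1; omega
      calc (∏ s ∈ S, f s.castSucc ^ (j - i1)) *
          -((-1 : R) ^ p * f (Fin.last m) ^ j * splitB x ⟨S, hS⟩) -
        (-1 : R) ^ (p + 1) * f (Fin.last m) ^ i1 *
          (f (Fin.last m) ^ (j - i1) *
            ((∏ s ∈ S, f s.castSucc ^ (j - i1)) * splitB x ⟨S, hS⟩))
          = ((-1 : R) ^ (p + 1) * f (Fin.last m) ^ j -
              (-1 : R) ^ (p + 1) * (f (Fin.last m) ^ i1 * f (Fin.last m) ^ (j - i1))) *
              ((∏ s ∈ S, f s.castSucc ^ (j - i1)) * splitB x ⟨S, hS⟩) := by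
            rw [pow_succ]; ring
        _ = 0 := by rw [hgg]; ring
    obtain ⟨y', hy'⟩ := H1 v hv
    -- assemble the primitive
    refine ⟨glue y' (fun S => f (Fin.last m) ^ (i1 - i) *
      koszulTransition (fun a => f a.castSucc) i i1 (p + 1) W S), ?_⟩
    set y'' : KoszulTerm R m (p + 1) := fun S => f (Fin.last m) ^ (i1 - i) *
      koszulTransition (fun a => f a.castSucc) i i1 (p + 1) W S with hy''_def
    funext T
    obtain ⟨T, hT⟩ := T
    by_cases hlast : Fin.last m ∈ T
    · -- subsets containing the last index
      obtain ⟨S0, rfl⟩ : ∃ S0, T = insert (Fin.last m) (femb S0) :=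
        ⟨fdown T, (insert_last_femb_fdown hlast).symm⟩
      have hS0 : S0.card = p := by
        rw [Finset.card_insert_of_notMem (last_not_mem_femb _), card_femb] at hT
        omega
      calc koszulDiff (fun a => f a ^ i) (p + 1) (glue y' y'')
            ⟨insert (Fin.last m) (femb S0), hT⟩
          = koszulDiff (fun a => f a.castSucc ^ i) p (splitB (glue y' y'')) ⟨S0, hS0⟩ :=
            koszulDiff_insert_last (fun a => f a ^ i) p (glue y' y'') S0 hS0
        _ = koszulDiff (fun a => f a.castSucc ^ i) p y'' ⟨S0, hS0⟩ := by
            rw [splitB_glue]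
        _ = f (Fin.last m) ^ (i1 - i) *
            koszulDiff (fun a => f a.castSucc ^ i) p
              (koszulTransition (fun a => f a.castSucc) i i1 (p + 1) W) ⟨S0, hS0⟩ :=
            congrFun (koszulDiff_smul (fun a => f a.castSucc ^ i) p
              (f (Fin.last m) ^ (i1 - i))
              (koszulTransition (fun a => f a.castSucc) i i1 (p + 1) W)) ⟨S0, hS0⟩
        _ = f (Fin.last m) ^ (i1 - i) *
            koszulTransition (fun a => f a.castSucc) i i1 p
              (koszulDiff (fun a => f a.castSucc ^ i1) p W) ⟨S0, hS0⟩ := by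
            rw [congrFun (koszulTransition_comm (fun a => f a.castSucc) hii1 p W) ⟨S0, hS0⟩]
        _ = f (Fin.last m) ^ (i1 - i) *
            ((∏ s ∈ S0, f s.castSucc ^ (i1 - i)) *
              (f (Fin.last m) ^ (j - i1) *
                koszulTransition (fun a => f a.castSucc) i1 j p (splitB x) ⟨S0, hS0⟩)) := by
            show f (Fin.last m) ^ (i1 - i) *
              ((∏ s ∈ S0, f s.castSucc ^ (i1 - i)) *
                koszulDiff (fun a => f a.castSucc ^ i1) p W ⟨S0, hS0⟩) = _
            rw [congrFun hW ⟨S0, hS0⟩]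
        _ = (f (Fin.last m) ^ (i1 - i) * f (Fin.last m) ^ (j - i1)) *
            koszulTransition (fun a => f a.castSucc) i i1 p
              (koszulTransition (fun a => f a.castSucc) i1 j p (splitB x)) ⟨S0, hS0⟩ := by
            show _ = (f (Fin.last m) ^ (i1 - i) * f (Fin.last m) ^ (j - i1)) *
              ((∏ s ∈ S0, f s.castSucc ^ (i1 - i)) *
                koszulTransition (fun a => f a.castSucc) i1 j p (splitB x) ⟨S0, hS0⟩)
            ring
        _ = f (Fin.last m) ^ (j - i) *
            koszulTransition (fun a => f a.castSucc) i j p (splitB x) ⟨S0, hS0⟩ := by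
            rw [congrFun (koszulTransition_trans (fun a => f a.castSucc) hii1 hi1j
              (splitB x)) ⟨S0, hS0⟩, ← pow_add]
            congr 2
            omega
        _ = koszulTransition f i j (p + 1) x ⟨insert (Fin.last m) (femb S0), hT⟩ :=
            (koszulTransition_insert_last f i j p x S0 hS0).symm
    · -- subsets avoiding the last index
      obtain ⟨S, rfl⟩ : ∃ S, T = femb S := ⟨fdown T, (femb_fdown hlast).symm⟩
      have hS : S.card = p + 1 := by rw [← card_femb]; exact hT
      calc koszulDiff (fun a => f a ^ i) (p + 1) (glue y' y'') ⟨femb S, hT⟩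
          = koszulDiff (fun a => f a.castSucc ^ i) (p + 1) (splitA (glue y' y'')) ⟨S, hS⟩ +
              (-1 : R) ^ (p + 1) * f (Fin.last m) ^ i * splitB (glue y' y'') ⟨S, hS⟩ :=
            koszulDiff_femb (fun a => f a ^ i) (p + 1) (glue y' y'') S hS
        _ = koszulDiff (fun a => f a.castSucc ^ i) (p + 1) y' ⟨S, hS⟩ +
              (-1 : R) ^ (p + 1) * f (Fin.last m) ^ i * y'' ⟨S, hS⟩ := by
            rw [splitA_glue, splitB_glue]
        _ = koszulTransition (fun a => f a.castSucc) i i1 (p + 1) v ⟨S, hS⟩ +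
              (-1 : R) ^ (p + 1) * f (Fin.last m) ^ i * y'' ⟨S, hS⟩ := by
            rw [congrFun hy' ⟨S, hS⟩]
        _ = (∏ s ∈ S, f s.castSucc ^ (i1 - i)) *
              (koszulTransition (fun a => f a.castSucc) i1 j (p + 1) (splitA x) ⟨S, hS⟩ -
                (-1 : R) ^ (p + 1) * f (Fin.last m) ^ i1 * W ⟨S, hS⟩) +
              (-1 : R) ^ (p + 1) * f (Fin.last m) ^ i *
                (f (Fin.last m) ^ (i1 - i) *
                  ((∏ s ∈ S, f s.castSucc ^ (i1 - i)) * W ⟨S, hS⟩)) := rfl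
        _ = koszulTransition (fun a => f a.castSucc) i i1 (p + 1)
              (koszulTransition (fun a => f a.castSucc) i1 j (p + 1) (splitA x)) ⟨S, hS⟩ +
              ((-1 : R) ^ (p + 1) * (f (Fin.last m) ^ i * f (Fin.last m) ^ (i1 - i)) -
                (-1 : R) ^ (p + 1) * f (Fin.last m) ^ i1) *
                ((∏ s ∈ S, f s.castSucc ^ (i1 - i)) * W ⟨S, hS⟩) := by
            show (∏ s ∈ S, f s.castSucc ^ (i1 - i)) * _ + _ =
              (∏ s ∈ S, f s.castSucc ^ (i1 - i)) *
                koszulTransition (fun a => f a.castSucc) i1 j (p + 1) (splitA x) ⟨S, hS⟩ + _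
            ring
        _ = koszulTransition (fun a => f a.castSucc) i j (p + 1) (splitA x) ⟨S, hS⟩ := by
            rw [congrFun (koszulTransition_trans (fun a => f a.castSucc) hii1 hi1j
              (splitA x)) ⟨S, hS⟩, ← pow_add]
            have : i + (i1 - i) = i1 := by omega
            rw [this]
            ring
        _ = koszulTransition f i j (p + 1) x ⟨femb S, hT⟩ :=
            (koszulTransition_femb f i j (p + 1) x S hS).symm

end Main

/-- Every ideal `I` of a Noetherian ring `R` is weakly proregular:
for any finite generating tuple `(f₀,…,f_n)` of `I` and any degree `k < 0`, the
inverse system of Koszul cohomologies `(H^k(K(R,(f₀^i,…,f_n^i))))_i` is pro-zero;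
elementwise: for every stage `i` there is a stage `j ≥ i` such that the transition
map sends every `k`-cocycle of `K(R, f^j)` to a `k`-coboundary of `K(R, f^i)`. -/
theorem noetherian_ideal_weakly_proregular
    (R : Type*) [CommRing R] [IsNoetherianRing R] (I : Ideal R)
    (m : ℕ) (f : Fin m → R) (hf : Ideal.span (Set.range f) = I)
    (k : ℤ) (hk : k < 0) :
    ∀ i : ℕ, ∃ j : ℕ, i ≤ j ∧
      ∀ x : KoszulTerm R m (((-k).toNat - 1) + 1),
        koszulDiff (fun a => f a ^ j) ((-k).toNat - 1) x = 0 →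
        ∃ y : KoszulTerm R m ((((-k).toNat - 1) + 1) + 1),
          koszulDiff (fun a => f a ^ i) (((-k).toNat - 1) + 1) y =
            koszulTransition f i j (((-k).toNat - 1) + 1) x := by
  intro i
  exact prore m f ((-k).toNat - 1) i
end

section
/- Let k be a field and let f, g ∈ k((t))^×. The Contou-Carrère symbol formula (f,g) = (−1)^{ν(f)ν(g)} · (a₀^{ν(g)} / b₀^{ν(f)}) · ∏∏-correction terms specializes, over the field k (where all coefficients a_i, b_j with negative index vanish), to the tame symbol: (f,g) = (−1)^{ν(f)ν(g)} (f^{ν(g)}/g^{ν(f)})|_{t=0}. -/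
private noncomputable def ordHomCC (k : Type*) [Field k] :
    (LaurentSeries k)ˣ →* Multiplicative ℤ where
  toFun u := Multiplicative.ofAdd (u : LaurentSeries k).order
  map_one' := by simp [HahnSeries.order_one]
  map_mul' u v := by
    simp [Units.val_mul, HahnSeries.order_mul u.ne_zero v.ne_zero, ofAdd_add]

private noncomputable def leadHomCC (k : Type*) [Field k] :
    (LaurentSeries k)ˣ →* kˣ where
  toFun u := Units.mk0 (u : LaurentSeries k).leadingCoeff
    (HahnSeries.leadingCoeff_ne_zero.mpr u.ne_zero)
  map_one' := by ext; simp [HahnSeries.leadingCoeff_one]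
  map_mul' u v := by
    ext
    simp only [Units.val_mul, Units.val_mk0]
    rw [HahnSeries.leadingCoeff_eq,
      HahnSeries.order_mul u.ne_zero v.ne_zero,
      HahnSeries.coeff_mul_order_add_order]

/-- Over a field `k` (where every unit of `k((t))` factors as
`a₀ t^{ν(f)} ∏_{i≥1}(1 − a_i t^i)` with no negative-index factors, so the
double-product correction terms of the Contou-Carrère formula are trivial),
the Contou-Carrère symbol formula
`(f,g) = (−1)^{ν(f)ν(g)} · a₀^{ν(g)}/b₀^{ν(f)}` specializes to the tame symbol
`(f,g) = (−1)^{ν(f)ν(g)} (f^{ν(g)}/g^{ν(f)})|_{t=0}`.  Here `a₀ = coeff_{ν(f)} f`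
and `b₀ = coeff_{ν(g)} g` are the leading coefficients, and `|_{t=0}` is the
constant coefficient. -/
theorem contouCarrere_eq_tame_over_field
    (k : Type*) [Field k] (f g : (LaurentSeries k)ˣ) :
    (-1 : k) ^ ((f : LaurentSeries k).order * (g : LaurentSeries k).order) *
        (((f : LaurentSeries k).coeff (f : LaurentSeries k).order) ^
            ((g : LaurentSeries k).order) /
          ((g : LaurentSeries k).coeff (g : LaurentSeries k).order) ^
            ((f : LaurentSeries k).order)) =
      (-1 : k) ^ ((f : LaurentSeries k).order * (g : LaurentSeries k).order) *
        ((f ^ ((g : LaurentSeries k).order) / g ^ ((f : LaurentSeries k).order) :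
            (LaurentSeries k)ˣ) : LaurentSeries k).coeff 0 := by
  congr 1
  set m := (g : LaurentSeries k).order with hm
  set n := (f : LaurentSeries k).order with hn
  set w : (LaurentSeries k)ˣ := f ^ m / g ^ n with hw
  have hord : (w : LaurentSeries k).order = 0 := by
    have key : ordHomCC k w = Multiplicative.ofAdd (0 : ℤ) := by
      rw [hw, map_div, map_zpow, map_zpow]
      show Multiplicative.ofAdd n ^ m / Multiplicative.ofAdd m ^ n = _
      rw [← ofAdd_zsmul, ← ofAdd_zsmul, ← ofAdd_sub]
      congr 1
      simp [mul_comm]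
    exact Multiplicative.ofAdd.injective key
  have hlc : (w : LaurentSeries k).leadingCoeff =
      ((f : LaurentSeries k).coeff n) ^ m / ((g : LaurentSeries k).coeff m) ^ n := by
    have h1 : (w : LaurentSeries k).leadingCoeff = ((leadHomCC k w : kˣ) : k) := rfl
    rw [h1, hw, map_div, map_zpow, map_zpow]
    simp only [leadHomCC, MonoidHom.coe_mk, OneHom.coe_mk, Units.val_div_eq_div_val,
      Units.val_zpow_eq_zpow_val, Units.val_mk0, HahnSeries.leadingCoeff_eq]
    rfl
  have h0 : (w : LaurentSeries k).coeff 0 = (w : LaurentSeries k).leadingCoeff := by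
    rw [HahnSeries.leadingCoeff_eq, hord]
  rw [h0, hlc]
end
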